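/- If a₁, a₂, a₃, a₄ > 0 and a₃² - a₁a₂a₃ + a₁²a₄ = 0, then the quartic λ⁴ + a₁λ³ + a₂λ² + a₃λ + a₄ has exactly two roots on the imaginary axis (namely ±i√(a₃/a₁)) and its other two roots have strictly negative real part. -/

import Mathlib

open Complex

/-- If a₁, a₂, a₃, a₄ > 0 and a₃² - a₁a₂a₃ + a₁²a₄ = 0, the quartic has exactly two
roots on the imaginary axis, namely ±i√(a₃/a₁), and the other roots have negative
real part. -/
theorem quartic_two_imaginary_roots
    (a₁ a₂ a₃ a₄ : ℝ)
    (ha₁ : 0 < a₁) (ha₂ : 0 < a₂) (ha₃ : 0 < a₃) (ha₄ : 0 < a₄)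
    (h : a₃ ^ 2 - a₁ * a₂ * a₃ + a₁ ^ 2 * a₄ = 0) :
    (I * Real.sqrt (a₃ / a₁)) ^ 4 + (a₁ : ℂ) * (I * Real.sqrt (a₃ / a₁)) ^ 3 +
      (a₂ : ℂ) * (I * Real.sqrt (a₃ / a₁)) ^ 2 + (a₃ : ℂ) * (I * Real.sqrt (a₃ / a₁)) +
      (a₄ : ℂ) = 0 ∧
    (∀ z : ℂ, z ^ 4 + (a₁ : ℂ) * z ^ 3 + (a₂ : ℂ) * z ^ 2 + (a₃ : ℂ) * z + (a₄ : ℂ) = 0 →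
      z = I * Real.sqrt (a₃ / a₁) ∨ z = -(I * Real.sqrt (a₃ / a₁)) ∨ z.re < 0) := by
  have ha₁' : (a₁ : ℂ) ≠ 0 := by exact_mod_cast ha₁.ne'
  have ha₃' : (a₃ : ℂ) ≠ 0 := by exact_mod_cast ha₃.ne'
  set s : ℝ := Real.sqrt (a₃ / a₁) with hs
  set c : ℂ := (a₃ : ℂ) / a₁ with hcdef
  set d : ℂ := (a₁ : ℂ) * a₄ / a₃ with hddef
  have h1 : (a₁ : ℂ) * c = a₃ := by rw [hcdef]; field_simp
  have h2 : c * d = a₄ := by rw [hcdef, hddef]; field_simp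
  have hC : (a₃ : ℂ) ^ 2 - a₁ * a₂ * a₃ + a₁ ^ 2 * a₄ = 0 := by exact_mod_cast h
  have h3 : c + d = a₂ := by
    rw [hcdef, hddef]
    field_simp
    linear_combination hC
  have hfac : ∀ z : ℂ, z ^ 4 + (a₁ : ℂ) * z ^ 3 + (a₂ : ℂ) * z ^ 2 + (a₃ : ℂ) * z + (a₄ : ℂ)
      = (z ^ 2 + c) * (z ^ 2 + a₁ * z + d) := by
    intro z
    linear_combination (-(z ^ 2)) * h3 - z * h1 - h2
  have hsr : s ^ 2 = a₃ / a₁ := Real.sq_sqrt (by positivity)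
  have hsq : ((s : ℂ)) ^ 2 = c := by
    calc ((s : ℂ)) ^ 2 = ((s ^ 2 : ℝ) : ℂ) := by push_cast; ring
      _ = ((a₃ / a₁ : ℝ) : ℂ) := by rw [hsr]
      _ = c := by rw [hcdef]; push_cast; ring
  have hIs : (I * (s : ℂ)) ^ 2 + c = 0 := by
    rw [mul_pow, I_sq, hsq]; ring
  constructor
  · rw [hfac, hIs, zero_mul]
  · intro z hz
    rw [hfac] at hz
    rcases mul_eq_zero.mp hz with h0 | h0
    · have : (z - I * s) * (z + I * s) = 0 := by
        have : z ^ 2 = (I * (s : ℂ)) ^ 2 := by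
          have := hIs
          linear_combination h0 - hIs
        linear_combination this
      rcases mul_eq_zero.mp this with h' | h'
      · left; exact sub_eq_zero.mp h'
      · right; left
        have := eq_neg_of_add_eq_zero_left h'
        exact this
    · right; right
      have hre := congrArg Complex.re h0
      have him := congrArg Complex.im h0
      simp [pow_two, Complex.add_re, Complex.add_im, Complex.mul_re, Complex.mul_im,
        Complex.div_re, Complex.div_im, Complex.ofReal_re, Complex.ofReal_im,
        hddef] at hre him
      have him' : z.im * (2 * z.re + a₁) = 0 := by linear_combination him
      rcases mul_eq_zero.mp him' with hy | hx
      · rw [hy] at hre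
        by_contra hxn
        push_neg at hxn
        have hdr : 0 < a₁ * a₄ * a₃ / (a₃ * a₃) := by positivity
        nlinarith [mul_nonneg hxn hxn, mul_nonneg ha₁.le hxn]
      · linarith
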